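/- In the load-coupling model, the per-UE load contribution y(σ²) = d / (M·B·log₂(1 + S/(I + σ²))) is a concave and increasing function of the noise-plus-interference term σ² + I, where S > 0 is the received signal power, for fixed positive constants d, M, B, S. -/

import Mathlib

open Real Set Filter

lemma log_ge_pade (x : ℝ) (hx : 0 ≤ x) : 2*x/(x+2) ≤ Real.log (1+x) := by
  set F : ℝ → ℝ := fun y => Real.log (1+y) - 2*y/(y+2) with hF
  have hder : ∀ y : ℝ, 0 ≤ y → HasDerivAt F (1/(1+y) - 4/(y+2)^2) y := by
    intro y hy
    have h1 : HasDerivAt (fun y : ℝ => Real.log (1+y)) (1/(1+y)) y := by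
      have := ((hasDerivAt_id y).const_add 1).log (by positivity)
      simpa using this
    have h2 : HasDerivAt (fun y : ℝ => 2*y/(y+2)) (4/(y+2)^2) y := by
      have := ((hasDerivAt_id y).const_mul 2).div ((hasDerivAt_id y).add_const 2)
        (by positivity)
      refine this.congr_deriv ?_
      simp only [id]
      field_simp
      ring
    exact h1.sub h2
  have hmono : MonotoneOn F (Ici 0) := by
    apply monotoneOn_of_deriv_nonneg (convex_Ici 0)
    · intro y hy
      exact (hder y hy).continuousAt.continuousWithinAt
    · intro y hy
      rw [interior_Ici] at hy
      exact (hder y (le_of_lt hy)).differentiableAt.differentiableWithinAt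
    · intro y hy
      rw [interior_Ici] at hy
      have hy' : (0:ℝ) < y := hy
      rw [(hder y (le_of_lt hy')).deriv]
      rw [sub_nonneg, div_le_div_iff₀ (by positivity) (by positivity)]
      nlinarith [sq_nonneg y]
  have h0 : F 0 = 0 := by simp [hF]
  have h1 := hmono (self_mem_Ici) hx hx
  rw [h0] at h1
  have h2 : 0 ≤ Real.log (1+x) - 2*x/(x+2) := h1
  linarith

/-- The per-UE load contribution `t ↦ d / (M·B·log₂(1 + S/t))`, as a function of the
noise-plus-interference power `t = σ² + I`, is concave and strictly increasing on
`(0, ∞)`, for fixed positive constants `d, M, B, S`. -/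
theorem load_contribution_concave_increasing (d M B S : ℝ)
    (hd : 0 < d) (hM : 0 < M) (hB : 0 < B) (hS : 0 < S) :
    ConcaveOn ℝ (Set.Ioi (0 : ℝ))
      (fun t : ℝ => d / (M * B * Real.logb 2 (1 + S / t))) ∧
    StrictMonoOn (fun t : ℝ => d / (M * B * Real.logb 2 (1 + S / t)))
      (Set.Ioi (0 : ℝ)) := by
  set c : ℝ := d * Real.log 2 / (M * B) with hc
  have hcpos : 0 < c := by
    apply div_pos (mul_pos hd (Real.log_pos one_lt_two)) (mul_pos hM hB)
  set g : ℝ → ℝ := fun t => Real.log (t+S) - Real.log t with hgdef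
  set f : ℝ → ℝ := fun t : ℝ => d / (M * B * Real.logb 2 (1 + S / t)) with hfdef
  set h : ℝ → ℝ := fun t => c / g t with hhdef
  -- basic facts
  have hgpos : ∀ t : ℝ, 0 < t → 0 < g t := by
    intro t ht
    have := Real.log_lt_log ht (by linarith : t < t + S)
    simp only [hgdef]; linarith
  have hloggt : ∀ t : ℝ, 0 < t → Real.log (1 + S/t) = g t := by
    intro t ht
    have h1 : (1:ℝ) + S/t = (t+S)/t := by field_simp
    rw [h1, Real.log_div (by positivity) (by positivity)]
  have hEq : Set.EqOn f h (Ioi 0) := by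
    intro t ht
    simp only [hfdef, hhdef, Real.logb, hloggt t ht, hc]
    have hl2 : Real.log 2 ≠ 0 := ne_of_gt (Real.log_pos one_lt_two)
    have hgne : g t ≠ 0 := ne_of_gt (hgpos t ht)
    field_simp
  -- first derivative
  have hg' : ∀ t : ℝ, 0 < t → HasDerivAt g (1/(t+S) - 1/t) t := by
    intro t ht
    have h1 : HasDerivAt (fun t : ℝ => Real.log (t+S)) (1/(t+S)) t := by
      have := ((hasDerivAt_id t).add_const S).log (by positivity)
      simpa using this
    have h2 := Real.hasDerivAt_log (ne_of_gt ht)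
    exact (h1.sub h2).congr_deriv (by simp [one_div])
  set f' : ℝ → ℝ := fun t => c * S / (t*(t+S)*(g t)^2) with hf'def
  have hh' : ∀ t : ℝ, 0 < t → HasDerivAt h (f' t) t := by
    intro t ht
    have hgne := ne_of_gt (hgpos t ht)
    have := (hasDerivAt_const t c).div (hg' t ht) hgne
    refine this.congr_deriv ?_
    simp only [hf'def]
    have h1 : t ≠ 0 := ne_of_gt ht
    have h2 : t + S ≠ 0 := by positivity
    field_simp
    ring
  have hfd : ∀ t : ℝ, 0 < t → HasDerivAt f (f' t) t := by
    intro t ht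
    apply (hh' t ht).congr_of_eventuallyEq
    exact Filter.eventuallyEq_of_mem (Ioi_mem_nhds ht) hEq
  have hf'pos : ∀ t : ℝ, 0 < t → 0 < f' t := by
    intro t ht
    have hgpos' := hgpos t ht
    simp only [hf'def]
    positivity
  -- key inequality for second derivative
  have hkey : ∀ t : ℝ, 0 < t → 2*S ≤ (2*t+S) * g t := by
    intro t ht
    have := log_ge_pade (S/t) (by positivity)
    rw [hloggt t ht] at this
    have h1 : 2*(S/t)/((S/t)+2) = 2*S/(2*t+S) := by
      rw [div_eq_div_iff (by positivity) (by positivity)]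
      field_simp
      ring
    rw [h1] at this
    rw [div_le_iff₀ (by positivity)] at this
    linarith [this]
  -- second derivative
  set q : ℝ → ℝ := fun t => t*(t+S)*(g t)^2 with hqdef
  set f'' : ℝ → ℝ := fun t => -(c*S * (g t * ((2*t+S) * g t - 2*S))) / (q t)^2 with hf''def
  have hq' : ∀ t : ℝ, 0 < t →
      HasDerivAt q ((1*(t+S)+t*1)*(g t)^2 + (t*(t+S))*((2:ℕ)*(g t)^1*(1/(t+S) - 1/t))) t := by
    intro t ht
    exact ((hasDerivAt_id t).mul ((hasDerivAt_id t).add_const S)).mul ((hg' t ht).pow 2)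
  have hf'd : ∀ t : ℝ, 0 < t → HasDerivAt f' (f'' t) t := by
    intro t ht
    have hqpos : 0 < q t := by
      have := hgpos t ht
      simp only [hqdef]; positivity
    have := (hasDerivAt_const t (c*S)).div (hq' t ht) (ne_of_gt hqpos)
    refine this.congr_deriv ?_
    simp only [hf''def, hqdef]
    have h1 : t ≠ 0 := ne_of_gt ht
    have h2 : t + S ≠ 0 := by positivity
    field_simp
    ring
  have hf''nonpos : ∀ t : ℝ, 0 < t → f'' t ≤ 0 := by
    intro t ht
    have hgpos' := hgpos t ht
    have hqpos : 0 < q t := by simp only [hqdef]; positivity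
    have hk := hkey t ht
    simp only [hf''def]
    apply div_nonpos_of_nonpos_of_nonneg
    · have : 0 ≤ g t * ((2*t+S) * g t - 2*S) := by
        apply mul_nonneg (le_of_lt hgpos')
        linarith
      nlinarith [mul_pos hcpos hS]
    · positivity
  have hcont : ContinuousOn f (Ioi 0) := fun t ht =>
    (hfd t ht).continuousAt.continuousWithinAt
  constructor
  · apply concaveOn_of_hasDerivWithinAt2_nonpos (convex_Ioi 0) hcont
      (f' := f') (f'' := f'')
    · intro t ht
      rw [interior_Ioi] at ht
      exact (hfd t ht).hasDerivWithinAt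
    · intro t ht
      rw [interior_Ioi] at ht
      exact (hf'd t ht).hasDerivWithinAt
    · intro t ht
      rw [interior_Ioi] at ht
      exact hf''nonpos t ht
  · apply strictMonoOn_of_deriv_pos (convex_Ioi 0) hcont
    intro t ht
    rw [interior_Ioi] at ht
    rw [(hfd t ht).deriv]
    exact hf'pos t ht
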